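/- For any finite sequence of real numbers a_1, ..., a_n, the maximum of Σ_i ε_i a_i over all sign vectors (ε_1,...,ε_n) ∈ {-1,+1}^n having an odd number of -1's equals Σ_i |a_i| - 2·min_i |a_i| if a_1·a_2·...·a_n > 0, and equals Σ_i |a_i| otherwise. -/

import Mathlib

open Finset

/-- Number of minus signs in a sign vector (encoded as a Boolean vector,
`true` meaning the sign `-1`). -/
def negCount {ι : Type*} [Fintype ι] [DecidableEq ι] (ε : ι → Bool) : ℕ :=
  (Finset.univ.filter (fun i => ε i = true)).card

/-- The signed sum `Σ ε_i a_i` corresponding to a sign vector. -/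
def sgnSum {ι : Type*} [Fintype ι] (a : ι → ℝ) (ε : ι → Bool) : ℝ :=
  ∑ i, (if ε i then -(a i) else a i)

/-- Sign vectors with an even number of `-1`'s. -/
def evenSigns (ι : Type*) [Fintype ι] [DecidableEq ι] : Finset (ι → Bool) :=
  Finset.univ.filter (fun ε => Even (negCount ε))

/-- Sign vectors with an odd number of `-1`'s. -/
def oddSigns (ι : Type*) [Fintype ι] [DecidableEq ι] : Finset (ι → Bool) :=
  Finset.univ.filter (fun ε => Odd (negCount ε))

lemma evenSigns_nonempty (ι : Type*) [Fintype ι] [DecidableEq ι] :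
    (evenSigns ι).Nonempty :=
  ⟨fun _ => false, by rw [evenSigns, Finset.mem_filter]; simp [negCount]⟩

lemma oddSigns_nonempty (ι : Type*) [Fintype ι] [DecidableEq ι] [Nonempty ι] :
    (oddSigns ι).Nonempty := by
  refine ⟨fun i => decide (i = Classical.arbitrary ι), ?_⟩
  rw [oddSigns, Finset.mem_filter]; simp [negCount, Finset.filter_eq']

/-- `s_even`: maximum of signed sums over sign vectors with evenly many minuses. -/
noncomputable def sEven {ι : Type*} [Fintype ι] [DecidableEq ι] (a : ι → ℝ) : ℝ :=
  (evenSigns ι).sup' (evenSigns_nonempty ι) (sgnSum a)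

/-- `s_odd`: maximum of signed sums over sign vectors with oddly many minuses. -/
noncomputable def sOdd {ι : Type*} [Fintype ι] [DecidableEq ι] [Nonempty ι] (a : ι → ℝ) : ℝ :=
  (oddSigns ι).sup' (oddSigns_nonempty ι) (sgnSum a)

section Aux
variable {ι : Type*} [Fintype ι] [DecidableEq ι]

lemma card_diff_parity (ε δ : ι → Bool) :
    (Finset.univ.filter (fun i => ε i ≠ δ i)).card
      + 2 * (Finset.univ.filter (fun i => ε i = true ∧ δ i = true)).card
    = negCount ε + negCount δ := by
  unfold negCount
  simp only [Finset.card_filter]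
  rw [Finset.mul_sum, ← Finset.sum_add_distrib, ← Finset.sum_add_distrib]
  refine Finset.sum_congr rfl fun i _ => ?_
  cases hε : ε i <;> cases hδ : δ i <;> simp [hε, hδ]

lemma sgnSum_eq (a : ι → ℝ) (ε : ι → Bool) :
    sgnSum a ε = (∑ i, |a i|)
      - 2 * ∑ i ∈ Finset.univ.filter (fun i => (if ε i then -(a i) else a i) < 0), |a i| := by
  rw [sgnSum, Finset.sum_filter, Finset.mul_sum, ← Finset.sum_sub_distrib]
  refine Finset.sum_congr rfl fun i _ => ?_
  cases hε : ε i <;> rcases abs_cases (a i) with ⟨h1, h2⟩ | ⟨h1, h2⟩ <;>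
    rw [h1] <;> split_ifs <;> linarith

lemma prod_sign (a : ι → ℝ) :
    ∏ i, a i = (-1 : ℝ) ^ ((Finset.univ.filter (fun i => a i < 0)).card) * ∏ i, |a i| := by
  calc ∏ i, a i = ∏ i, ((if a i < 0 then (-1 : ℝ) else 1) * |a i|) := by
        refine Finset.prod_congr rfl fun i _ => ?_
        rcases abs_cases (a i) with ⟨h1, h2⟩ | ⟨h1, h2⟩ <;> split_ifs <;> linarith
    _ = (∏ i, if a i < 0 then (-1 : ℝ) else 1) * ∏ i, |a i| := Finset.prod_mul_distrib
    _ = _ := by rw [Finset.prod_ite, Finset.prod_const, Finset.prod_const_one, mul_one]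

lemma negCount_flip (δ : ι → Bool) (j : ι) :
    Odd (negCount (fun i => xor (decide (i = j)) (δ i))) ↔ ¬ Odd (negCount δ) := by
  have h := card_diff_parity (fun i => xor (decide (i = j)) (δ i)) δ
  have hd : (Finset.univ.filter (fun i => (xor (decide (i = j)) (δ i) : Bool) ≠ δ i)) = {j} := by
    ext i
    simp only [Finset.mem_filter, Finset.mem_univ, true_and, Finset.mem_singleton]
    cases hδ : δ i <;> by_cases hij : i = j <;> simp [hδ, hij]
  rw [hd, Finset.card_singleton] at h
  rw [Nat.odd_iff, Nat.odd_iff]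
  omega

end Aux

section Main
variable {ι : Type*} [Fintype ι] [DecidableEq ι] [Nonempty ι]

def oddSigns' (ι : Type*) [Fintype ι] [DecidableEq ι] : Finset (ι → Bool) :=
  Finset.univ.filter (fun ε => Odd (negCount ε))

theorem sOdd_eq_aux (a : ι → ℝ) (ne : (oddSigns ι).Nonempty) :
    ((0 < ∏ i, a i) →
      (oddSigns ι).sup' ne (sgnSum a)
        = ∑ i, |a i| - 2 * Finset.univ.inf' Finset.univ_nonempty (fun i => |a i|)) ∧
    (¬ (0 < ∏ i, a i) →
      (oddSigns ι).sup' ne (sgnSum a) = ∑ i, |a i|) := by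
  set δ : ι → Bool := fun i => decide (a i < 0) with hδ
  set N : ℕ := (Finset.univ.filter (fun i => a i < 0)).card with hN
  have hNδ : negCount δ = N := by
    simp [negCount, hδ, hN]
  have hmatch : ∀ (ε : ι → Bool) i, ε i = δ i → (if ε i then -(a i) else a i) = |a i| := by
    intro ε i h
    rw [h, hδ]
    by_cases hai : a i < 0
    · simp [hai, abs_of_neg hai]
    · simp [hai, abs_of_nonneg (not_lt.1 hai)]
  have habs0 : (0:ℝ) ≤ ∏ i, |a i| := Finset.prod_nonneg fun i _ => abs_nonneg _
  -- B ε subset {j} when ε matches δ away from j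
  have hBsub : ∀ (ε : ι → Bool) (j : ι), (∀ i, i ≠ j → ε i = δ i) →
      (Finset.univ.filter (fun i => (if ε i then -(a i) else a i) < 0)) ⊆ {j} := by
    intro ε j h i hi
    simp only [Finset.mem_filter, Finset.mem_univ, true_and] at hi
    simp only [Finset.mem_singleton]
    by_contra hij
    rw [hmatch ε i (h i hij)] at hi
    exact absurd hi (not_lt.2 (abs_nonneg _))
  have hlow : ∀ (ε : ι → Bool) (j : ι) (c : ℝ), (∀ i, i ≠ j → ε i = δ i) → |a j| ≤ c →
      (∑ i, |a i|) - 2 * c ≤ sgnSum a ε := by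
    intro ε j c h hc
    rw [sgnSum_eq]
    have h1 : ∑ i ∈ Finset.univ.filter (fun i => (if ε i then -(a i) else a i) < 0), |a i|
        ≤ ∑ i ∈ ({j} : Finset ι), |a i| :=
      Finset.sum_le_sum_of_subset_of_nonneg (hBsub ε j h) (fun i _ _ => abs_nonneg _)
    rw [Finset.sum_singleton] at h1
    linarith
  have hub : ∀ (ε : ι → Bool), sgnSum a ε ≤ ∑ i, |a i| := by
    intro ε
    rw [sgnSum_eq]
    have : (0:ℝ) ≤ ∑ i ∈ Finset.univ.filter (fun i => (if ε i then -(a i) else a i) < 0), |a i| :=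
      Finset.sum_nonneg fun i _ => abs_nonneg _
    linarith
  clear_value δ N
  constructor
  · -- positive product
    intro hp
    have hne : ∀ i, a i ≠ 0 := by
      intro i
      exact Finset.prod_ne_zero_iff.1 hp.ne' i (Finset.mem_univ i)
    have hEven : Even N := by
      by_contra ho
      rw [Nat.not_even_iff_odd] at ho
      rw [prod_sign a, ← hN, ho.neg_one_pow] at hp
      nlinarith
    obtain ⟨j, -, hj⟩ := Finset.exists_mem_eq_inf' (Finset.univ_nonempty (α := ι)) (fun i => |a i|)
    refine le_antisymm (Finset.sup'_le _ _ ?_) ?_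
    · -- upper bound
      intro ε hε
      rw [oddSigns, Finset.mem_filter] at hε
      have hOdd := hε.2
      rw [sgnSum_eq]
      have key : ∀ i, ((if ε i then -(a i) else a i) < 0) ↔ ε i ≠ δ i := by
        intro i
        rcases (hne i).lt_or_gt with hai | hai <;> cases hεi : ε i <;>
          simp [hδ, hεi, hai, asymm hai, not_lt.2 hai.le]
      have hBeq : Finset.univ.filter (fun i => (if ε i then -(a i) else a i) < 0)
          = Finset.univ.filter (fun i => ε i ≠ δ i) := by
        apply Finset.filter_congr
        intro i _
        simpa using key i
      have hpar := card_diff_parity ε δ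
      rw [hNδ] at hpar
      have hBodd : Odd (Finset.univ.filter (fun i => ε i ≠ δ i)).card := by
        rw [Nat.odd_iff] at hOdd ⊢
        rw [Nat.even_iff] at hEven
        omega
      obtain ⟨i0, hi0⟩ := Finset.card_pos.1 hBodd.pos
      have h1 : |a i0| ≤ ∑ i ∈ Finset.univ.filter (fun i => ε i ≠ δ i), |a i| :=
        Finset.single_le_sum (fun i _ => abs_nonneg (a i)) hi0
      have h2 : Finset.univ.inf' Finset.univ_nonempty (fun i => |a i|) ≤ |a i0| :=
        Finset.inf'_le _ (Finset.mem_univ i0)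
      rw [hBeq]
      linarith
    · -- lower bound via witness
      set ε : ι → Bool := fun i => xor (decide (i = j)) (δ i) with hε
      have hmem : ε ∈ oddSigns ι := by
        rw [oddSigns, Finset.mem_filter]
        refine ⟨Finset.mem_univ _, ?_⟩
        rw [hε, negCount_flip, hNδ, Nat.not_odd_iff_even]
        exact hEven
      refine le_trans ?_ (Finset.le_sup' (sgnSum a) hmem)
      have := hlow ε j (Finset.univ.inf' Finset.univ_nonempty (fun i => |a i|))
        (fun i hij => by simp [hε, hij]) (le_of_eq hj.symm)
      linarith
  · -- nonpositive product
    intro hp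
    rcases (not_lt.1 hp).lt_or_eq with hlt | heq
    · -- negative product
      have hOddN : Odd N := by
        by_contra he
        rw [Nat.not_odd_iff_even] at he
        rw [prod_sign a, ← hN, he.neg_one_pow, one_mul] at hlt
        linarith
      have hmem : δ ∈ oddSigns ι := by
        rw [oddSigns, Finset.mem_filter]
        exact ⟨Finset.mem_univ _, hNδ ▸ hOddN⟩
      refine le_antisymm (Finset.sup'_le _ _ fun ε _ => hub ε) ?_
      refine le_trans ?_ (Finset.le_sup' (sgnSum a) hmem)
      rw [sgnSum_eq]
      have hB : Finset.univ.filter (fun i => (if δ i then -(a i) else a i) < 0) = ∅ := by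
        rw [Finset.filter_eq_empty_iff]
        intro i _
        rw [hmatch δ i rfl]
        exact not_lt.2 (abs_nonneg _)
      rw [hB, Finset.sum_empty]
      linarith
    · -- zero product
      obtain ⟨j, -, hj⟩ := Finset.prod_eq_zero_iff.1 heq
      by_cases hOddN : Odd N
      · have hmem : δ ∈ oddSigns ι := by
          rw [oddSigns, Finset.mem_filter]
          exact ⟨Finset.mem_univ _, hNδ ▸ hOddN⟩
        refine le_antisymm (Finset.sup'_le _ _ fun ε _ => hub ε) ?_
        refine le_trans ?_ (Finset.le_sup' (sgnSum a) hmem)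
        have := hlow δ j 0 (fun i _ => rfl) (by rw [hj, abs_zero])
        linarith
      · set ε : ι → Bool := fun i => xor (decide (i = j)) (δ i) with hε
        have hmem : ε ∈ oddSigns ι := by
          rw [oddSigns, Finset.mem_filter]
          refine ⟨Finset.mem_univ _, ?_⟩
          rw [hε, negCount_flip, hNδ]
          exact hOddN
        refine le_antisymm (Finset.sup'_le _ _ fun ε _ => hub ε) ?_
        refine le_trans ?_ (Finset.le_sup' (sgnSum a) hmem)
        have := hlow ε j 0 (fun i hij => by simp [hε, hij]) (by rw [hj, abs_zero])
        linarith

end Main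

theorem sOdd_eq {ι : Type*} [Fintype ι] [DecidableEq ι] [Nonempty ι] (a : ι → ℝ) :
    ((0 < ∏ i, a i) →
      sOdd a = ∑ i, |a i| - 2 * Finset.univ.inf' Finset.univ_nonempty (fun i => |a i|)) ∧
    (¬ (0 < ∏ i, a i) → sOdd a = ∑ i, |a i|) := by
  exact sOdd_eq_aux a (oddSigns_nonempty ι)
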